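/- Let (𝒞, 𝒞^⊥¹) be a cotorsion pair on 𝓑 with 𝒞 rigid, and let ℋ/𝒞 be its heart. If g : A → B is an epimorphism in 𝓑 with A, B ∈ ℋ such that the image ḡ of g in the heart ℋ/𝒞 is an epimorphism, then Hom_𝓑(X, g) : Hom_𝓑(X, A) → Hom_𝓑(X, B) is surjective for every X ∈ Ω𝒞. -/

import Mathlib

open CategoryTheory Category Limits ZeroObject

universe v u

namespace CotorsionPaper

variable {B : Type u} [Category.{v} B] [Abelian B]

/-- `f, g` form a short exact sequence `0 → X → Y → Z → 0`. -/
def IsSES {X Y Z : B} (f : X ⟶ Y) (g : Y ⟶ Z) : Prop :=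
  ∃ w : f ≫ g = 0, (ShortComplex.mk f g w).ShortExact

/-- `Ext¹(X, Y) = 0`: every short exact sequence `0 → Y → E → X → 0` splits. -/
def Ext1Zero (X Y : B) : Prop :=
  ∀ ⦃E : B⦄ (i : Y ⟶ E) (p : E ⟶ X), IsSES i p → ∃ s : X ⟶ E, s ≫ p = 𝟙 X

/-- `Ext²(X, Y) = 0`, via dimension shifting: `Ext¹(K, Y) = 0` for any syzygy `K` of `X`. -/
def Ext2Zero (X Y : B) : Prop :=
  ∀ ⦃K P : B⦄ (i : K ⟶ P) (p : P ⟶ X), Projective P → IsSES i p → Ext1Zero K Y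

/-- A (strictly) full additive subcategory: closed under isomorphisms,
contains a zero object and is closed under finite direct sums. -/
structure AddSubcat (S : Set B) : Prop where
  zero_mem : (0 : B) ∈ S
  iso_closed : ∀ ⦃X Y : B⦄, (X ≅ Y) → X ∈ S → Y ∈ S
  sum_closed : ∀ ⦃X Y : B⦄, X ∈ S → Y ∈ S → (X ⊞ Y) ∈ S

/-- `S` is closed under direct summands (retracts). -/
def ClosedUnderSummands (S : Set B) : Prop :=
  ∀ ⦃X Y : B⦄ (r : X ⟶ Y) (s : Y ⟶ X), s ≫ r = 𝟙 Y → X ∈ S → Y ∈ S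

/-- `S` is rigid: `Ext¹(X, Y) = 0` for all `X, Y ∈ S`. -/
def Rigid (S : Set B) : Prop :=
  ∀ ⦃X⦄, X ∈ S → ∀ ⦃Y⦄, Y ∈ S → Ext1Zero X Y

/-- `S^⊥¹`. -/
def rightPerp (S : Set B) : Set B := {Y | ∀ ⦃X⦄, X ∈ S → Ext1Zero X Y}

/-- `^⊥¹S`. -/
def leftPerp (S : Set B) : Set B := {X | ∀ ⦃Y⦄, Y ∈ S → Ext1Zero X Y}

/-- `f : X ⟶ A` is a right `S`-approximation of `A`. -/
def IsRightApprox (S : Set B) {X A : B} (f : X ⟶ A) : Prop :=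
  X ∈ S ∧ ∀ ⦃X' : B⦄, X' ∈ S → ∀ g : X' ⟶ A, ∃ h : X' ⟶ X, h ≫ f = g

def ContravariantlyFinite (S : Set B) : Prop :=
  ∀ A : B, ∃ (X : B) (f : X ⟶ A), IsRightApprox S f

/-- `f : A ⟶ X` is a left `S`-approximation of `A`. -/
def IsLeftApprox (S : Set B) {A X : B} (f : A ⟶ X) : Prop :=
  X ∈ S ∧ ∀ ⦃X' : B⦄, X' ∈ S → ∀ g : A ⟶ X', ∃ h : X ⟶ X', f ≫ h = g

def CovariantlyFinite (S : Set B) : Prop :=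
  ∀ A : B, ∃ (X : B) (f : A ⟶ X), IsLeftApprox S f

/-- `(U, V)` is a cotorsion pair. -/
structure CotorsionPair (U V : Set B) : Prop where
  summands_left : ClosedUnderSummands U
  summands_right : ClosedUnderSummands V
  ext : ∀ ⦃X⦄, X ∈ U → ∀ ⦃Y⦄, Y ∈ V → Ext1Zero X Y
  resol : ∀ X : B, ∃ (VX UX : B) (i : VX ⟶ UX) (p : UX ⟶ X),
    VX ∈ V ∧ UX ∈ U ∧ IsSES i p
  coresol : ∀ X : B, ∃ (VX UX : B) (i : X ⟶ VX) (p : VX ⟶ UX),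
    VX ∈ V ∧ UX ∈ U ∧ IsSES i p

/-- `CoCone(S, T)`. -/
def CoCone (S T : Set B) : Set B :=
  {X | ∃ (B' B'' : B) (i : X ⟶ B') (p : B' ⟶ B''), B' ∈ S ∧ B'' ∈ T ∧ IsSES i p}

/-- `Cone(S, T)`. -/
def Cone (S T : Set B) : Set B :=
  {X | ∃ (B' B'' : B) (i : B' ⟶ B'') (p : B'' ⟶ X), B' ∈ S ∧ B'' ∈ T ∧ IsSES i p}

/-- The subcategory `𝒫` of projective objects. -/
def projSet : Set B := {P | Projective P}

/-- The subcategory `ℐ` of injective objects. -/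
def injSet : Set B := {I | Injective I}

/-- `Ω𝒞`, the (first) syzygy of `𝒞`. -/
def Syz (C : Set B) : Set B := CoCone projSet C

/-- Condition (RCP): `𝒫 ⊆ 𝒞`, `𝒞` rigid, contravariantly finite,
closed under direct summands (and a full additive subcategory). -/
structure RCP (C : Set B) : Prop where
  add : AddSubcat C
  proj_mem : ∀ ⦃P : B⦄, Projective P → P ∈ C
  rigid : Rigid C
  contra : ContravariantlyFinite C
  summands : ClosedUnderSummands C

/-- `f` factors through an object of `S`. -/
def FactorsThru (S : Set B) {X Y : B} (f : X ⟶ Y) : Prop :=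
  ∃ (Z : B) (g : X ⟶ Z) (h : Z ⟶ Y), Z ∈ S ∧ g ≫ h = f

/-- The ideal of morphisms of the full subcategory on `H` factoring through an object of `S`. -/
def idealRel (H S : Set B) : HomRel (ObjectProperty.FullSubcategory (· ∈ H)) :=
  fun X Y f g => FactorsThru S (show X.obj ⟶ Y.obj from f.hom - g.hom)

/-- The ideal quotient `H/S`. -/
abbrev HeartCat (H S : Set B) := CategoryTheory.Quotient (idealRel H S)

/-- The quotient functor `H → H/S`. -/
abbrev heartQ (H S : Set B) : ObjectProperty.FullSubcategory (· ∈ H) ⥤ HeartCat H S :=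
  CategoryTheory.Quotient.functor _

/-- The zero morphism in the ideal quotient `H/S`. -/
def heartZero (H S : Set B) (X Y : HeartCat H S) : X ⟶ Y :=
  (heartQ H S).map (0 : X.as ⟶ Y.as)

/-- `κ` is a kernel of `φ` in the ideal quotient `H/S`. -/
structure IsKernelArrow {H S : Set B} {K X Y : HeartCat H S}
    (κ : K ⟶ X) (φ : X ⟶ Y) : Prop where
  w : κ ≫ φ = heartZero H S K Y
  lift : ∀ ⦃T : HeartCat H S⦄ (t : T ⟶ X), t ≫ φ = heartZero H S T Y →
    ∃! u : T ⟶ K, u ≫ κ = t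

/-- `π` is a cokernel of `φ` in the ideal quotient `H/S`. -/
structure IsCokernelArrow {H S : Set B} {X Y Q : HeartCat H S}
    (φ : X ⟶ Y) (π : Y ⟶ Q) : Prop where
  w : φ ≫ π = heartZero H S X Q
  desc : ∀ ⦃T : HeartCat H S⦄ (t : Y ⟶ T), φ ≫ t = heartZero H S X T →
    ∃! u : Q ⟶ T, π ≫ u = t

/-- The class of epimorphisms in `H/S` whose kernel object lies in `A`. -/
def epiClassWithKernelIn (H S A : Set B) : MorphismProperty (HeartCat H S) :=
  fun X Y φ => Epi φ ∧ ∃ (K : HeartCat H S) (κ : K ⟶ X),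
    K.as.obj ∈ A ∧ IsKernelArrow κ φ

/-- The class of monomorphisms in `H/S` whose cokernel object lies in `A`. -/
def monoClassWithCokernelIn (H S A : Set B) : MorphismProperty (HeartCat H S) :=
  fun X Y φ => Mono φ ∧ ∃ (Q : HeartCat H S) (π : Y ⟶ Q),
    Q.as.obj ∈ A ∧ IsCokernelArrow φ π

/-- The diagram `(⋄)` associated with a morphism `f : Y ⟶ X`. -/
structure DiamondDiagram {Y X : B} (f : Y ⟶ X) {OmX PX Z₁ IY SgY Z₂ : B}
    (q : OmX ⟶ PX) (p : PX ⟶ X) (j : OmX ⟶ Z₁) (g : Z₁ ⟶ Y)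
    (i : Y ⟶ IY) (c : IY ⟶ SgY) (h : X ⟶ Z₂) (e : Z₂ ⟶ SgY)
    (u : Z₁ ⟶ PX) (v : IY ⟶ Z₂) : Prop where
  projPX : Projective PX
  injIY : Injective IY
  ses_proj : IsSES q p
  ses_pullback : IsSES j g
  ses_inj : IsSES i c
  ses_pushout : IsSES h e
  comm₁ : j ≫ u = q
  comm₂ : u ≫ p = g ≫ f
  comm₃ : f ≫ h = i ≫ v
  comm₄ : v ≫ e = c

/-- The class of morphisms `f : Y ⟶ X` admitting a diagram `(⋄)` with
`Z₁ ∈ ZCond` and `h` factoring through an object of `HCond`. -/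
def Rclass (ZCond HCond : Set B) : MorphismProperty B :=
  fun Y X f => ∃ (OmX PX Z₁ IY SgY Z₂ : B) (q : OmX ⟶ PX) (p : PX ⟶ X)
    (j : OmX ⟶ Z₁) (g : Z₁ ⟶ Y) (i : Y ⟶ IY) (c : IY ⟶ SgY)
    (h : X ⟶ Z₂) (e : Z₂ ⟶ SgY) (u : Z₁ ⟶ PX) (v : IY ⟶ Z₂),
    DiamondDiagram f q p j g i c h e u v ∧ Z₁ ∈ ZCond ∧ FactorsThru HCond h

/-- The class of morphisms `f : Y ⟶ X` admitting a diagram `(⋄)` with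
`g` factoring through an object of `GCond` and `h` through an object of `HCond`. -/
def RtildeClass (GCond HCond : Set B) : MorphismProperty B :=
  fun Y X f => ∃ (OmX PX Z₁ IY SgY Z₂ : B) (q : OmX ⟶ PX) (p : PX ⟶ X)
    (j : OmX ⟶ Z₁) (g : Z₁ ⟶ Y) (i : Y ⟶ IY) (c : IY ⟶ SgY)
    (h : X ⟶ Z₂) (e : Z₂ ⟶ SgY) (u : Z₁ ⟶ PX) (v : IY ⟶ Z₂),
    DiamondDiagram f q p j g i c h e u v ∧ FactorsThru GCond g ∧ FactorsThru HCond h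

/-- The objects of the heart `ℋ` of a cotorsion pair `(U, V)`. -/
def HeartObjects (U V : Set B) : Set B :=
  {X | (∃ (VX UX : B) (i : VX ⟶ UX) (p : UX ⟶ X),
          IsSES i p ∧ VX ∈ V ∧ UX ∈ U ∩ V) ∧
       (∃ (VX UX : B) (i : X ⟶ VX) (p : VX ⟶ UX),
          IsSES i p ∧ VX ∈ U ∩ V ∧ UX ∈ U)}


section Aux

variable {B : Type u} [Category.{v} B] [Abelian B]

lemma IsSES.w' {X Y Z : B} {f : X ⟶ Y} {g : Y ⟶ Z} (h : IsSES f g) : f ≫ g = 0 :=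
  h.choose

lemma IsSES.mono' {X Y Z : B} {f : X ⟶ Y} {g : Y ⟶ Z} (h : IsSES f g) : Mono f :=
  h.choose_spec.mono_f

lemma IsSES.epi' {X Y Z : B} {f : X ⟶ Y} {g : Y ⟶ Z} (h : IsSES f g) : Epi g :=
  h.choose_spec.epi_g

/-- Lift a morphism killing `g` through the kernel `f`. -/
lemma IsSES.lift' {X Y Z : B} {f : X ⟶ Y} {g : Y ⟶ Z} (h : IsSES f g)
    {A : B} (k : A ⟶ Y) (hk : k ≫ g = 0) : ∃ l : A ⟶ X, l ≫ f = k := by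
  obtain ⟨w, hw⟩ := h
  haveI := hw.mono_f
  exact hw.exact.lift' k hk

/-- Descend a morphism killed by `f` through the cokernel `g`. -/
lemma IsSES.desc' {X Y Z : B} {f : X ⟶ Y} {g : Y ⟶ Z} (h : IsSES f g)
    {A : B} (k : Y ⟶ A) (hk : f ≫ k = 0) : ∃ l : Z ⟶ A, g ≫ l = k := by
  obtain ⟨w, hw⟩ := h
  haveI := hw.epi_g
  exact hw.exact.desc' k hk

/-- Constructor for `IsSES` from the kernel property. -/
lemma isSES_of_ker {X Y Z : B} {f : X ⟶ Y} {g : Y ⟶ Z} (w : f ≫ g = 0)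
    (hm : Mono f) (he : Epi g)
    (hker : ∀ {A : B} (k : A ⟶ Y), k ≫ g = 0 → ∃ l : A ⟶ X, l ≫ f = k) :
    IsSES f g := by
  refine ⟨w, ShortComplex.ShortExact.mk' ?_ hm he⟩
  haveI : Mono (ShortComplex.mk f g w).f := hm
  exact ShortComplex.exact_of_f_is_kernel _
    (KernelFork.IsLimit.ofι' f w
      (fun k hk => ⟨(hker k hk).choose, (hker k hk).choose_spec⟩))

/-- Constructor for `IsSES` from the cokernel property. -/
lemma isSES_of_coker {X Y Z : B} {f : X ⟶ Y} {g : Y ⟶ Z} (w : f ≫ g = 0)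
    (hm : Mono f) (he : Epi g)
    (hcoker : ∀ {A : B} (k : Y ⟶ A), f ≫ k = 0 → ∃ l : Z ⟶ A, g ≫ l = k) :
    IsSES f g := by
  refine ⟨w, ShortComplex.ShortExact.mk' ?_ hm he⟩
  haveI : Epi (ShortComplex.mk f g w).g := he
  exact ShortComplex.exact_of_g_is_cokernel _
    (CokernelCofork.IsColimit.ofπ' g w
      (fun k hk => ⟨(hcoker k hk).choose, (hcoker k hk).choose_spec⟩))

/-- Pushout of a short exact sequence along a morphism out of the subobject. -/
lemma pushout_ses {V E W V' : B} {i : V ⟶ E} {p : E ⟶ W} (h : IsSES i p) (c : V ⟶ V') :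
    IsSES (pushout.inr i c)
      (pushout.desc p 0 (by rw [h.w', comp_zero])) := by
  haveI := h.mono'
  haveI := h.epi'
  refine isSES_of_coker (pushout.inr_desc _ _ _) inferInstance ?_ ?_
  · have hcomp : Epi (pushout.inl i c ≫ pushout.desc p 0 (by rw [h.w', comp_zero])) := by
      rw [pushout.inl_desc]; exact h.epi'
    exact epi_of_epi (pushout.inl i c) _
  · intro A k hk
    have h1 : i ≫ pushout.inl i c ≫ k = 0 := by
      rw [← Category.assoc, pushout.condition, Category.assoc, hk, comp_zero]
    obtain ⟨v, hv⟩ := h.desc' (pushout.inl i c ≫ k) (by rw [← Category.assoc] at h1 ⊢; exact h1)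
    refine ⟨v, ?_⟩
    apply pushout.hom_ext
    · rw [← Category.assoc, pushout.inl_desc, hv]
    · rw [← Category.assoc, pushout.inr_desc, zero_comp, hk]

/-- Pullback of a short exact sequence along a morphism into the quotient. -/
lemma pullback_ses {V E W W' : B} {i : V ⟶ E} {p : E ⟶ W} (h : IsSES i p) (c : W' ⟶ W) :
    IsSES (pullback.lift i 0 (by rw [h.w', zero_comp]))
      (pullback.snd p c) := by
  haveI := h.mono'
  haveI := h.epi'
  refine isSES_of_ker (pullback.lift_snd _ _ _) ?_ inferInstance ?_
  · have hcomp : Mono ((pullback.lift i 0 (by rw [h.w', zero_comp])) ≫ pullback.fst p c) := by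
      rw [pullback.lift_fst]; exact h.mono'
    exact mono_of_mono _ (pullback.fst p c)
  · intro A k hk
    have h1 : (k ≫ pullback.fst p c) ≫ p = 0 := by
      rw [Category.assoc, pullback.condition, ← Category.assoc, hk, zero_comp]
    obtain ⟨l, hl⟩ := h.lift' (k ≫ pullback.fst p c) h1
    refine ⟨l, ?_⟩
    apply pullback.hom_ext
    · rw [Category.assoc, pullback.lift_fst, hl]
    · rw [Category.assoc, pullback.lift_snd, comp_zero, hk]

/-- A section of the quotient of a SES yields a retraction of the kernel. -/
lemma retraction_of_section {V E W : B} {i : V ⟶ E} {p : E ⟶ W} (h : IsSES i p)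
    {s : W ⟶ E} (hs : s ≫ p = 𝟙 W) :
    ∃ ρ : E ⟶ V, i ≫ ρ = 𝟙 V ∧ ρ ≫ i = 𝟙 E - p ≫ s := by
  have h1 : (𝟙 E - p ≫ s) ≫ p = 0 := by
    rw [Preadditive.sub_comp, Category.id_comp, Category.assoc, hs, Category.comp_id, sub_self]
  obtain ⟨ρ, hρ⟩ := h.lift' _ h1
  haveI := h.mono'
  refine ⟨ρ, ?_, hρ⟩
  rw [← cancel_mono i, Category.assoc, hρ, Category.id_comp, Preadditive.comp_sub,
    Category.comp_id, ← Category.assoc, h.w', zero_comp, sub_zero]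

/-- A split short exact sequence exhibits the middle term as a biproduct. -/
lemma split_iso_biprod {V E W : B} {i : V ⟶ E} {p : E ⟶ W} (h : IsSES i p)
    {s : W ⟶ E} (hs : s ≫ p = 𝟙 W) : Nonempty (E ≅ V ⊞ W) := by
  obtain ⟨ρ, hρ1, hρ2⟩ := retraction_of_section h hs
  haveI := h.mono'
  have hsρ : s ≫ ρ = 0 := by
    rw [← cancel_mono i, Category.assoc, hρ2, zero_comp, Preadditive.comp_sub,
      Category.comp_id, ← Category.assoc, hs, Category.id_comp, sub_self]
  refine ⟨⟨biprod.lift ρ p, biprod.desc i s, ?_, ?_⟩⟩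
  · rw [biprod.lift_desc, hρ2]
    abel
  · apply biprod.hom_ext' <;> apply biprod.hom_ext <;>
      simp [hρ1, hρ2, hsρ, hs, h.w']

/-- If `Ext¹(W, V') = 0`, morphisms `V ⟶ V'` extend along the inclusion of a SES
`0 → V → E → W → 0`. -/
lemma extend_of_ext1zero {V E W V' : B} {i : V ⟶ E} {p : E ⟶ W} (h : IsSES i p)
    (hext : Ext1Zero W V') (u : V ⟶ V') : ∃ k : E ⟶ V', i ≫ k = u := by
  obtain ⟨s, hs⟩ := hext _ _ (pushout_ses h u)
  obtain ⟨ρ, hρ1, _⟩ := retraction_of_section (pushout_ses h u) hs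
  refine ⟨pushout.inl i u ≫ ρ, ?_⟩
  rw [← Category.assoc, pushout.condition, Category.assoc, hρ1, Category.comp_id]

/-- `Ext¹(-, V)` vanishing is closed under binary biproducts. -/
lemma ext1zero_biprod {X Y V : B} (hX : Ext1Zero X V) (hY : Ext1Zero Y V) :
    Ext1Zero (X ⊞ Y) V := by
  intro E i p hses
  have hpb1 := pullback_ses hses (biprod.inl : X ⟶ X ⊞ Y)
  have hpb2 := pullback_ses hses (biprod.inr : Y ⟶ X ⊞ Y)
  obtain ⟨s₁, hs₁⟩ := hX _ _ hpb1
  obtain ⟨s₂, hs₂⟩ := hY _ _ hpb2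
  refine ⟨biprod.desc (s₁ ≫ pullback.fst p biprod.inl) (s₂ ≫ pullback.fst p biprod.inr), ?_⟩
  apply biprod.hom_ext'
  · rw [← Category.assoc, biprod.inl_desc, Category.assoc, pullback.condition,
      ← Category.assoc, hs₁, Category.id_comp, Category.comp_id]
  · rw [← Category.assoc, biprod.inr_desc, Category.assoc, pullback.condition,
      ← Category.assoc, hs₂, Category.id_comp, Category.comp_id]

end Aux

section Aux2

variable {B : Type u} [Category.{v} B] [Abelian B]

/-- A cotorsion pair's left class is closed under isomorphisms. -/
lemma cp_iso_mem {C : Set B} (hcp : CotorsionPair C (rightPerp C))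
    {X Y : B} (e : X ≅ Y) (hX : X ∈ C) : Y ∈ C :=
  hcp.summands_left e.hom e.inv e.inv_hom_id hX

/-- A cotorsion pair's left class contains the zero object. -/
lemma cp_zero_mem {C : Set B} (hcp : CotorsionPair C (rightPerp C)) : (0 : B) ∈ C := by
  obtain ⟨V, U, i, p, hV, hU, hses⟩ := hcp.resol (0 : B)
  refine hcp.summands_left p (0 : (0 : B) ⟶ U) ?_ hU
  apply (isZero_zero B).eq_of_src

/-- A cotorsion pair's left class is closed under binary biproducts. -/
lemma cp_sum_mem {C : Set B} (hcp : CotorsionPair C (rightPerp C))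
    {X Y : B} (hX : X ∈ C) (hY : Y ∈ C) : (X ⊞ Y) ∈ C := by
  obtain ⟨V, U, i, p, hV, hU, hses⟩ := hcp.resol (X ⊞ Y)
  have hext : Ext1Zero (X ⊞ Y) V :=
    ext1zero_biprod (hcp.ext hX hV) (hcp.ext hY hV)
  obtain ⟨s, hs⟩ := hext _ _ hses
  exact hcp.summands_left p s hs hU

/-- Extract a factorization from an `EqvGen`-chain in the ideal quotient. -/
lemma factorsThru_of_eqvGen {H S : Set B} (h0 : (0 : B) ∈ S)
    (hsum : ∀ ⦃X Y : B⦄, X ∈ S → Y ∈ S → (X ⊞ Y) ∈ S)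
    {X Y : ObjectProperty.FullSubcategory (· ∈ H)} {f g : X ⟶ Y}
    (h : Relation.EqvGen (fun p q : (X ⟶ Y) => HomRel.CompClosure (idealRel H S) p q) f g) :
    FactorsThru S (show X.obj ⟶ Y.obj from f.hom - g.hom) := by
  induction h with
  | rel a b hab =>
    induction hab with
    | intro a' b' u m₁ m₂ v hr =>
      obtain ⟨Z, c, d, hZ, hcd⟩ := hr
      refine ⟨Z, u.hom ≫ c, d ≫ v.hom, hZ, ?_⟩
      simp only [ObjectProperty.FullSubcategory.comp_hom] at hcd ⊢
      rw [← Preadditive.comp_sub, ← Preadditive.sub_comp, ← hcd]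
      simp only [Category.assoc]
  | refl a =>
    refine ⟨0, 0, 0, h0, ?_⟩
    show (0 : _ ⟶ (0 : B)) ≫ (0 : (0 : B) ⟶ _) = a.hom - a.hom
    simp
  | symm a b _ ih =>
    obtain ⟨Z, c, d, hZ, hcd⟩ := ih
    have hcd' : c ≫ d = a.hom - b.hom := hcd
    refine ⟨Z, c, -d, hZ, ?_⟩
    show c ≫ (-d) = b.hom - a.hom
    rw [Preadditive.comp_neg, hcd', neg_sub]
  | trans a b c _ _ ih1 ih2 =>
    obtain ⟨Z₁, c₁, d₁, hZ₁, h1⟩ := ih1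
    obtain ⟨Z₂, c₂, d₂, hZ₂, h2⟩ := ih2
    have h1' : c₁ ≫ d₁ = a.hom - b.hom := h1
    have h2' : c₂ ≫ d₂ = b.hom - c.hom := h2
    refine ⟨Z₁ ⊞ Z₂, biprod.lift c₁ c₂, biprod.desc d₁ d₂, hsum hZ₁ hZ₂, ?_⟩
    show biprod.lift c₁ c₂ ≫ biprod.desc d₁ d₂ = a.hom - c.hom
    rw [biprod.lift_desc, h1', h2']
    abel

end Aux2

/-- if `ḡ` is an epimorphism in the heart, then `Hom(X, g)` is
surjective for `X ∈ Ω𝒞`. -/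
theorem statement_3 {B : Type u} [Category.{v} B] [Abelian B]
    [EnoughProjectives B] [EnoughInjectives B]
    (C : Set B) (hcp : CotorsionPair C (rightPerp C)) (hrigid : Rigid C)
    {A X : B} (hA : A ∈ CoCone C C) (hX : X ∈ CoCone C C)
    (g : A ⟶ X) (hg : Epi g)
    (hgbar : Epi ((heartQ (CoCone C C) C).map (X := ⟨A, hA⟩) (Y := ⟨X, hX⟩) (ObjectProperty.homMk g))) :
    ∀ ⦃U : B⦄, U ∈ Syz C → ∀ f : U ⟶ X, ∃ h : U ⟶ A, h ≫ g = f := by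
  intro U hU f
  obtain ⟨P, C0, a, b, hP, hC0, hab⟩ := id hU
  obtain ⟨CA1, CA2, α, β, hCA1, hCA2, hαβ⟩ := id hA
  obtain ⟨C1, C2, x, y, hC1, hC2, hxy⟩ := id hX
  haveI hgepi : Epi g := hg
  haveI hPproj : Projective P := hP
  -- the pushout `T` of `α : A ⟶ CA1` along `g : A ⟶ X`
  -- with SES `0 → X → T → CA2 → 0`
  have hT := pushout_ses hαβ g
  haveI hTmono : Mono (pushout.inr α g) := hT.mono'
  -- `pushout.inl α g` is an epimorphism
  haveI hα'epi : Epi (pushout.inl α g) := by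
    refine ⟨fun {W} u v huv => ?_⟩
    have h2 : g ≫ pushout.inr α g ≫ u = g ≫ pushout.inr α g ≫ v := by
      rw [← Category.assoc, ← pushout.condition, Category.assoc, huv,
        ← Category.assoc, pushout.condition, Category.assoc]
    exact pushout.hom_ext huv ((cancel_epi g).1 h2)
  -- `T` belongs to the coheart `CoCone C C`
  have hZ1 := pushout_ses hxy (pushout.inr α g)
  have hZ2 := pushout_ses hT x
  obtain ⟨s, hs⟩ := hrigid hCA2 hC1 _ _ hZ2
  obtain ⟨e2⟩ := split_iso_biprod hZ2 hs
  have hZ2mem : (pushout (pushout.inr α g) x : B) ∈ C :=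
    cp_iso_mem hcp e2.symm (cp_sum_mem hcp hC1 hCA2)
  have hZ1mem : (pushout x (pushout.inr α g) : B) ∈ C :=
    cp_iso_mem hcp (pushoutSymmetry (pushout.inr α g) x) hZ2mem
  have hTmem : (pushout α g : B) ∈ CoCone C C :=
    ⟨pushout x (pushout.inr α g), C2, pushout.inr x (pushout.inr α g),
      pushout.desc y 0 (by rw [hxy.w', comp_zero]), hZ1mem, hC2, hZ1⟩
  -- in the heart, the image of `pushout.inr α g : X ⟶ T` is zero,
  -- because `ḡ` is an epimorphism
  have hq2 : (heartQ (CoCone C C) C).map (X := ⟨X, hX⟩) (Y := ⟨pushout α g, hTmem⟩)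
        (ObjectProperty.homMk (pushout.inr α g))
      = (heartQ (CoCone C C) C).map (X := ⟨X, hX⟩) (Y := ⟨pushout α g, hTmem⟩)
          (ObjectProperty.homMk (0 : X ⟶ pushout α g)) := by
    haveI := hgbar
    apply (cancel_epi ((heartQ (CoCone C C) C).map (X := ⟨A, hA⟩) (Y := ⟨X, hX⟩) (ObjectProperty.homMk g))).1
    rw [← Functor.map_comp, ← Functor.map_comp]
    apply CategoryTheory.Quotient.sound
    refine ⟨CA1, α, pushout.inl α g, hCA1, ?_⟩
    show α ≫ pushout.inl α g = g ≫ pushout.inr α g - g ≫ (0 : X ⟶ pushout α g)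
    rw [comp_zero, sub_zero]
    exact pushout.condition
  have hq3 := Quot.eq.1 hq2
  have hfac := factorsThru_of_eqvGen (cp_zero_mem hcp)
    (fun _ _ hx' hy' => cp_sum_mem hcp hx' hy') hq3
  obtain ⟨C', t₁, t₂, hC', ht12⟩ := hfac
  have ht12' : t₁ ≫ t₂ = pushout.inr α g := ht12.trans (sub_zero _)
  -- extend `f ≫ t₁ : U ⟶ C'` along `a : U ⟶ P` using `Ext¹(C0, C') = 0`
  obtain ⟨k, hk⟩ := extend_of_ext1zero hab (hrigid hC0 hC') (f ≫ t₁)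
  -- lift `k ≫ t₂ : P ⟶ T` along the epimorphism `pushout.inl α g`
  have hl : Projective.factorThru (k ≫ t₂) (pushout.inl α g) ≫ pushout.inl α g = k ≫ t₂ :=
    Projective.factorThru_comp _ _
  set l : P ⟶ CA1 := Projective.factorThru (k ≫ t₂) (pushout.inl α g) with hldef
  have e1 : a ≫ l ≫ pushout.inl α g = f ≫ pushout.inr α g := by
    rw [hl, ← Category.assoc, hk, Category.assoc, ht12']
  -- `a ≫ l` is killed by `β`, hence factors through `α`
  have wβ : α ≫ β = g ≫ (0 : X ⟶ CA2) := by rw [hαβ.w', comp_zero]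
  have hab2 : (a ≫ l) ≫ β = 0 := by
    rw [← pushout.inl_desc β (0 : X ⟶ CA2) wβ, ← Category.assoc, Category.assoc a l,
      e1, Category.assoc, pushout.inr_desc, comp_zero]
  obtain ⟨h, hh⟩ := hαβ.lift' (a ≫ l) hab2
  refine ⟨h, ?_⟩
  rw [← cancel_mono (pushout.inr α g), Category.assoc, ← pushout.condition,
    ← Category.assoc, hh, Category.assoc]
  exact e1

end CotorsionPaper
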